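/- Let (F,σ) be a constant-stable difference field of characteristic 0, let e ≥ 1, and let λ_1,…,λ_e be pairwise coprime integers > 1. Let α_1,…,α_e ∈ const(F,σ) be such that α_i is a primitive λ_i-th root of unity for each i. Let E := F[z_1,…,z_e]/⟨z_1^{λ_1}−1,…,z_e^{λ_e}−1⟩ with t_i the image of z_i, equipped with the unique ring automorphism extending σ with σ(t_i) = α_i·t_i; and with λ := λ_1⋯λ_e, let F[t] := F[z]/⟨z^λ−1⟩ with t the image of z, equipped with the unique ring automorphism extending σ with σ(t) = (α_1⋯α_e)·t. Then: (1) α_1⋯α_e is a primitive λ-th root of unity in F and const(F[t],σ) = const(F,σ); (2) there exist natural numbers r_1,…,r_e and a ring isomorphism τ : E → F[t] such that τ fixes F elementwise, τ(t_i) = t^{r_i} for all i, and τ(σ(x)) = σ(τ(x)) for all x ∈ E; (3) const(E,σ) = const(F,σ). -/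

import Mathlib

set_option maxHeartbeats 1600000 in
set_option synthInstance.maxHeartbeats 400000 in
/-- Merging several R-extensions with pairwise coprime orders into a
single R-extension: part (1) the product of the `α_i` is a primitive `λ`-th root of
unity (`λ = λ_1⋯λ_e`) and `F[t]` is an R-extension; part (2) there is a difference ring
isomorphism `τ : E → F[t]` fixing `F` with `τ(t_i) = t^{r_i}`; part (3) `E` is an
R-extension, i.e. `const(E,σ) = const(F,σ)`. -/
theorem stmt6 {F : Type*} [Field F] [CharZero F]
    (σ : F ≃+* F)
    (hCS : ∀ k : ℕ, 1 ≤ k → ∀ c : F, (⇑σ)^[k] c = c → σ c = c)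
    (e : ℕ) (he : 1 ≤ e)
    (lam : Fin e → ℕ) (hlam : ∀ i, 1 < lam i)
    (hcop : ∀ i j, i ≠ j → Nat.Coprime (lam i) (lam j))
    (α : Fin e → F) (hαconst : ∀ i, σ (α i) = α i)
    (hαpow : ∀ i, α i ^ lam i = 1)
    (hαprim : ∀ i, ∀ m : ℕ, 1 ≤ m → m < lam i → α i ^ m ≠ 1)
    (I : Ideal (MvPolynomial (Fin e) F))
    (hI : I = Ideal.span (Set.range fun i =>
        MvPolynomial.X i ^ lam i - (1 : MvPolynomial (Fin e) F)))
    (σE : (MvPolynomial (Fin e) F ⧸ I) ≃+* (MvPolynomial (Fin e) F ⧸ I))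
    (hEC : ∀ a : F, σE (Ideal.Quotient.mk I (MvPolynomial.C a)) =
        Ideal.Quotient.mk I (MvPolynomial.C (σ a)))
    (hEX : ∀ i, σE (Ideal.Quotient.mk I (MvPolynomial.X i)) =
        Ideal.Quotient.mk I (MvPolynomial.C (α i) * MvPolynomial.X i))
    (J : Ideal (Polynomial F))
    (hJ : J = Ideal.span {(Polynomial.X : Polynomial F) ^ (∏ i, lam i) - 1})
    (σt : (Polynomial F ⧸ J) ≃+* (Polynomial F ⧸ J))
    (htC : ∀ a : F, σt (Ideal.Quotient.mk J (Polynomial.C a)) =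
        Ideal.Quotient.mk J (Polynomial.C (σ a)))
    (htX : σt (Ideal.Quotient.mk J Polynomial.X) =
        Ideal.Quotient.mk J (Polynomial.C (∏ i, α i) * Polynomial.X)) :
    -- (1)
    ((∏ i, α i) ^ (∏ i, lam i) = 1 ∧
      (∀ m : ℕ, 1 ≤ m → m < ∏ i, lam i → (∏ i, α i) ^ m ≠ 1) ∧
      (∀ f : Polynomial F ⧸ J, σt f = f →
        ∃ c : F, σ c = c ∧ f = Ideal.Quotient.mk J (Polynomial.C c))) ∧
    -- (2)
    (∃ (r : Fin e → ℕ) (τ : (MvPolynomial (Fin e) F ⧸ I) ≃+* (Polynomial F ⧸ J)),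
      (∀ a : F, τ (Ideal.Quotient.mk I (MvPolynomial.C a)) =
        Ideal.Quotient.mk J (Polynomial.C a)) ∧
      (∀ i, τ (Ideal.Quotient.mk I (MvPolynomial.X i)) =
        (Ideal.Quotient.mk J Polynomial.X) ^ r i) ∧
      (∀ x, τ (σE x) = σt (τ x))) ∧
    -- (3)
    (∀ f : MvPolynomial (Fin e) F ⧸ I, σE f = f →
      ∃ c : F, σ c = c ∧ f = Ideal.Quotient.mk I (MvPolynomial.C c)) := by
  classical
  set L := ∏ i, lam i with hLdef
  set A := ∏ i, α i with hAdef
  have hLpos : 0 < L := Finset.prod_pos fun i _ => lt_trans one_pos (hlam i)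
  have hord : ∀ i, orderOf (α i) = lam i := fun i =>
    (orderOf_eq_iff (lt_trans one_pos (hlam i))).2
      ⟨hαpow i, fun m hmlt hmpos => hαprim i m hmpos hmlt⟩
  have hordprod : ∀ s : Finset (Fin e), orderOf (∏ i ∈ s, α i) = ∏ i ∈ s, lam i := by
    intro s
    induction s using Finset.induction_on with
    | empty => simp
    | insert a s h ih =>
      rw [Finset.prod_insert h, Finset.prod_insert h,
        (Commute.all _ _).orderOf_mul_eq_mul_orderOf_of_coprime, hord, ih]
      rw [hord, ih]
      exact Nat.Coprime.prod_right fun j hj => hcop a j (fun hh => h (hh ▸ hj))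
  have hordA : orderOf A = L := hordprod Finset.univ
  have h1a : A ^ L = 1 := hordA ▸ pow_orderOf_eq_one A
  have h1b : ∀ m : ℕ, 1 ≤ m → m < L → A ^ m ≠ 1 := fun m h1 h2 hm =>
    absurd (Nat.le_of_dvd h1 (hordA ▸ orderOf_dvd_of_pow_eq_one hm)) (not_le.2 h2)
  have hσA : σ A = A := by
    rw [hAdef, map_prod]
    exact Finset.prod_congr rfl fun i _ => hαconst i
  -- fixed point engine
  have fixp : ∀ b c : F, σ b = b → b ^ L = 1 → σ c * b = c → σ c = c ∧ c * b = c := by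
    intro b c hb hbL hcb
    have key : ∀ k : ℕ, (⇑σ)^[k] c * b ^ k = c := by
      intro k
      induction k with
      | zero => simp
      | succ k ih =>
        rw [Function.iterate_succ_apply']
        have h2 : σ ((⇑σ)^[k] c) * b ^ k = σ c := by
          have := congrArg σ ih
          rwa [map_mul, map_pow, hb] at this
        calc σ ((⇑σ)^[k] c) * b ^ (k + 1) = σ ((⇑σ)^[k] c) * b ^ k * b := by ring
          _ = σ c * b := by rw [h2]
          _ = c := hcb
    have hL : (⇑σ)^[L] c = c := by
      have := key L
      rwa [hbL, mul_one] at this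
    have hc : σ c = c := hCS L hLpos c hL
    refine ⟨hc, ?_⟩
    conv_lhs => rw [← hc]
    exact hcb
  -- tX^L = 1
  have hgJ : (Polynomial.X ^ L - 1 : Polynomial F) ∈ J := by
    rw [hJ]; exact Ideal.subset_span rfl
  have htL : (Ideal.Quotient.mk J Polynomial.X) ^ L = 1 := by
    have h0 := Ideal.Quotient.eq_zero_iff_mem.2 hgJ
    rw [map_sub, map_pow, map_one, sub_eq_zero] at h0
    exact h0
  -- the lift of σt to Polynomial F
  set Sig : Polynomial F →+* Polynomial F :=
    Polynomial.eval₂RingHom (Polynomial.C.comp (σ : F →+* F))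
      (Polynomial.C A * Polynomial.X) with hSigdef
  have hSigC : ∀ a : F, Sig (Polynomial.C a) = Polynomial.C (σ a) := by
    intro a; simp [hSigdef]
  have hSigX : Sig Polynomial.X = Polynomial.C A * Polynomial.X := by
    simp [hSigdef]
  have hcomm : ∀ p : Polynomial F, σt (Ideal.Quotient.mk J p) =
      Ideal.Quotient.mk J (Sig p) := by
    have hext : (σt : Polynomial F ⧸ J →+* Polynomial F ⧸ J).comp (Ideal.Quotient.mk J) =
        (Ideal.Quotient.mk J).comp Sig := by
      apply Polynomial.ringHom_ext
      · intro a; simp [htC, hSigC]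
      · simp [htX, hSigX]
    intro p
    exact RingHom.congr_fun hext p
  have hSigcoeff : ∀ (p : Polynomial F) (n : ℕ),
      (Sig p).coeff n = σ (p.coeff n) * A ^ n := by
    intro p
    induction p using Polynomial.induction_on' with
    | add p q hp hq =>
      intro n
      simp [map_add, hp n, hq n, add_mul]
    | monomial k a =>
      intro n
      have : Sig ((Polynomial.monomial k) a) =
          Polynomial.C (σ a * A ^ k) * Polynomial.X ^ k := by
        rw [hSigdef]
        simp only [Polynomial.coe_eval₂RingHom, Polynomial.eval₂_monomial,
          RingHom.coe_comp, Function.comp_apply, RingEquiv.coe_toRingHom]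
        rw [mul_pow, ← Polynomial.C_pow, map_mul]
        ring
      rw [this, Polynomial.coeff_C_mul, Polynomial.coeff_X_pow, Polynomial.coeff_monomial]
      rcases eq_or_ne n k with rfl | hkn
      · simp
      · rw [if_neg hkn, if_neg (Ne.symm hkn)]
        simp
  -- part (1c)
  have h1c : ∀ f : Polynomial F ⧸ J, σt f = f →
      ∃ c : F, σ c = c ∧ f = Ideal.Quotient.mk J (Polynomial.C c) := by
    intro f hf
    obtain ⟨p0, rfl⟩ := Ideal.Quotient.mk_surjective f
    have hg : (Polynomial.X ^ L - 1 : Polynomial F).Monic := by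
      simpa using Polynomial.monic_X_pow_sub_C (1 : F) hLpos.ne'
    set g : Polynomial F := Polynomial.X ^ L - 1 with hgdef
    set p := p0 %ₘ g with hpdef
    have hmkp : Ideal.Quotient.mk J p = Ideal.Quotient.mk J p0 := by
      conv_rhs => rw [← Polynomial.modByMonic_add_div p0 g]
      rw [map_add, map_mul, Ideal.Quotient.eq_zero_iff_mem.2 hgJ, zero_mul, add_zero]
    have hdegg : g.degree = (L : WithBot ℕ) := by
      rw [hgdef]
      simpa using Polynomial.degree_X_pow_sub_C hLpos (1 : F)
    have hdeg : p.degree < (L : WithBot ℕ) := by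
      rw [← hdegg]
      exact Polynomial.degree_modByMonic_lt p0 hg
    have hfix : Ideal.Quotient.mk J (Sig p) = Ideal.Quotient.mk J p := by
      rw [← hcomm, hmkp, hf]
    have hcoeffzero : ∀ m : ℕ, L ≤ m → p.coeff m = 0 :=
      (Polynomial.degree_lt_iff_coeff_zero p L).1 hdeg
    have hdegS : (Sig p).degree < (L : WithBot ℕ) := by
      refine (Polynomial.degree_lt_iff_coeff_zero _ L).2 ?_
      intro m hm
      rw [hSigcoeff, hcoeffzero m hm, map_zero, zero_mul]
    have hpe : Sig p = p := by
      have hmem : Sig p - p ∈ J := Ideal.Quotient.eq.mp hfix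
      rw [hJ, Ideal.mem_span_singleton] at hmem
      have : Sig p - p = 0 := by
        refine Polynomial.eq_zero_of_dvd_of_degree_lt hmem ?_
        rw [hdegg]
        exact lt_of_le_of_lt (Polynomial.degree_sub_le _ _) (max_lt hdegS hdeg)
      exact sub_eq_zero.mp this
    have hco : ∀ n : ℕ, σ (p.coeff n) * A ^ n = p.coeff n := by
      intro n; rw [← hSigcoeff, hpe]
    have hAn : ∀ n : ℕ, σ (A ^ n) = A ^ n := fun n => by rw [map_pow, hσA]
    have hALn : ∀ n : ℕ, (A ^ n) ^ L = 1 := fun n => by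
      rw [← pow_mul, mul_comm, pow_mul, h1a, one_pow]
    have hcz : ∀ n : ℕ, 1 ≤ n → p.coeff n = 0 := by
      intro n hn
      by_contra hne
      have hnL : n < L := by
        have h1 := Polynomial.le_degree_of_ne_zero hne
        have := lt_of_le_of_lt h1 hdeg
        exact_mod_cast this
      obtain ⟨-, h2⟩ := fixp (A ^ n) (p.coeff n) (hAn n) (hALn n) (hco n)
      have : A ^ n = 1 := by
        have h3 : p.coeff n * A ^ n = p.coeff n * 1 := by rw [mul_one]; exact h2
        exact mul_left_cancel₀ hne h3
      exact h1b n hn hnL this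
    have hc0 : σ (p.coeff 0) = p.coeff 0 := by
      have := hco 0; rwa [pow_zero, mul_one] at this
    refine ⟨p.coeff 0, hc0, ?_⟩
    rw [← hmkp]
    congr 1
    ext n
    rcases Nat.eq_zero_or_pos n with rfl | hn
    · simp
    · rw [hcz n hn, Polynomial.coeff_C, if_neg hn.ne']
  -- ============ part (2) ============
  set M : Fin e → ℕ := fun i => ∏ j ∈ Finset.univ.erase i, lam j with hMdef
  have hML : ∀ i, lam i * M i = L :=
    fun i => Finset.mul_prod_erase Finset.univ lam (Finset.mem_univ i)
  have hcopM : ∀ i, Nat.Coprime (M i) (lam i) := fun i =>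
    Nat.Coprime.prod_left fun j hj => hcop j i (Finset.ne_of_mem_erase hj)
  choose u hu using fun i => (Nat.exists_mul_mod_eq_one_of_coprime (hcopM i) (hlam i)).imp fun _ h => h.2
  set r : Fin e → ℕ := fun i => M i * u i with hrdef
  have hrmod : ∀ i, r i % lam i = 1 := fun i => hu i
  have hr1 : ∀ i, ∃ k, r i = lam i * k + 1 := by
    intro i
    refine ⟨r i / lam i, ?_⟩
    conv_lhs => rw [← Nat.div_add_mod (r i) (lam i)]
    rw [hrmod i]
  have hrdvd : ∀ i j, j ≠ i → lam j ∣ r i := fun i j hji =>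
    Dvd.dvd.mul_right
      (Finset.dvd_prod_of_mem lam (Finset.mem_erase.2 ⟨hji, Finset.mem_univ j⟩)) (u i)
  have hLri : ∀ i, L ∣ r i * lam i := by
    intro i; refine ⟨u i, ?_⟩; rw [← hML i, hrdef]; ring
  have hAr : ∀ i, A ^ r i = α i := by
    intro i
    rw [hAdef, ← Finset.prod_pow]
    refine (Finset.prod_eq_single i (fun j _ hji => ?_)
      (fun h => absurd (Finset.mem_univ i) h)).trans ?_
    · obtain ⟨d, hd⟩ := hrdvd i j hji
      rw [hd, pow_mul, hαpow j, one_pow]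
    · obtain ⟨k, hk⟩ := hr1 i
      rw [hk, pow_succ, pow_mul, hαpow i, one_pow, one_mul]
  have hTi : ∀ i, (Ideal.Quotient.mk I (MvPolynomial.X i)) ^ lam i = 1 := by
    intro i
    have hmem : (MvPolynomial.X i ^ lam i - 1 : MvPolynomial (Fin e) F) ∈ I := by
      rw [hI]; exact Ideal.subset_span ⟨i, rfl⟩
    have h0 := Ideal.Quotient.eq_zero_iff_mem.2 hmem
    rw [map_sub, map_pow, map_one, sub_eq_zero] at h0
    exact h0
  have htri : ∀ i, (Ideal.Quotient.mk J Polynomial.X) ^ (r i * lam i) = 1 := by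
    intro i
    obtain ⟨k, hk⟩ := hLri i
    rw [hk, pow_mul, htL, one_pow]
  have hTiL : ∀ i, (Ideal.Quotient.mk I (MvPolynomial.X i)) ^ L = 1 := by
    intro i
    rw [← hML i, pow_mul, hTi, one_pow]
  set φ : MvPolynomial (Fin e) F →+* Polynomial F ⧸ J :=
    MvPolynomial.eval₂Hom ((Ideal.Quotient.mk J).comp Polynomial.C)
      (fun i => (Ideal.Quotient.mk J Polynomial.X) ^ r i) with hφdef
  have hφker : ∀ a ∈ I, φ a = 0 := by
    have hle : I ≤ RingHom.ker φ := by
      rw [hI]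
      refine Ideal.span_le.2 ?_
      rintro x ⟨i, rfl⟩
      rw [SetLike.mem_coe, RingHom.mem_ker]
      simp only [map_sub, map_pow, map_one, hφdef, MvPolynomial.eval₂Hom_X']
      rw [← pow_mul, htri, sub_self]
    exact fun a ha => RingHom.mem_ker.1 (hle ha)
  set τ0 : (MvPolynomial (Fin e) F ⧸ I) →+* Polynomial F ⧸ J :=
    Ideal.Quotient.lift I φ hφker with hτ0def
  have hτ0mk : ∀ q, τ0 (Ideal.Quotient.mk I q) = φ q := fun q =>
    Ideal.Quotient.lift_mk I φ hφker
  have hτ0C : ∀ a : F, τ0 (Ideal.Quotient.mk I (MvPolynomial.C a)) =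
      Ideal.Quotient.mk J (Polynomial.C a) := by
    intro a; rw [hτ0mk]; simp [hφdef]
  have hτ0X : ∀ i, τ0 (Ideal.Quotient.mk I (MvPolynomial.X i)) =
      (Ideal.Quotient.mk J Polynomial.X) ^ r i := by
    intro i; rw [hτ0mk]; simp [hφdef]
  set ψ : Polynomial F →+* MvPolynomial (Fin e) F ⧸ I :=
    Polynomial.eval₂RingHom ((Ideal.Quotient.mk I).comp MvPolynomial.C)
      (∏ i, Ideal.Quotient.mk I (MvPolynomial.X i)) with hψdef
  have hψC : ∀ a : F, ψ (Polynomial.C a) = Ideal.Quotient.mk I (MvPolynomial.C a) := by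
    intro a; simp [hψdef]
  have hψX : ψ Polynomial.X = ∏ i, Ideal.Quotient.mk I (MvPolynomial.X i) := by
    simp [hψdef]
  have hψker : ∀ a ∈ J, ψ a = 0 := by
    have hle : J ≤ RingHom.ker ψ := by
      rw [hJ]
      refine Ideal.span_le.2 ?_
      intro x hx
      rw [Set.mem_singleton_iff] at hx
      subst hx
      rw [SetLike.mem_coe, RingHom.mem_ker, map_sub, map_pow, map_one, hψX,
        ← Finset.prod_pow]
      rw [Finset.prod_congr rfl fun i _ => hTiL i, Finset.prod_const_one, sub_self]
    exact fun a ha => RingHom.mem_ker.1 (hle ha)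
  set τinv : (Polynomial F ⧸ J) →+* MvPolynomial (Fin e) F ⧸ I :=
    Ideal.Quotient.lift J ψ hψker with hτinvdef
  have hτinvmk : ∀ q, τinv (Ideal.Quotient.mk J q) = ψ q := fun q =>
    Ideal.Quotient.lift_mk J ψ hψker
  -- sum of r
  have hsummod : ∀ i, (∑ j, r j) % lam i = 1 := by
    intro i
    rw [← Finset.add_sum_erase Finset.univ r (Finset.mem_univ i)]
    obtain ⟨d, hd⟩ : lam i ∣ ∑ j ∈ Finset.univ.erase i, r j :=
      Finset.dvd_sum fun j hj => hrdvd j i (Finset.ne_of_mem_erase hj).symm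
    rw [hd, Nat.add_mul_mod_self_left, hrmod i]
  have hsum1 : 1 ≤ ∑ j, r j := by
    rcases Nat.eq_zero_or_pos (∑ j, r j) with h0 | h1
    · exfalso
      have := hsummod ⟨0, he⟩
      rw [h0, Nat.zero_mod] at this
      exact zero_ne_one this
    · exact h1
  have hdvd_i : ∀ i, lam i ∣ (∑ j, r j) - 1 := by
    intro i
    refine ⟨(∑ j, r j) / lam i, ?_⟩
    have h := Nat.div_add_mod (∑ j, r j) (lam i)
    rw [hsummod i] at h
    omega
  have hprodvd : ∀ s : Finset (Fin e), (∏ i ∈ s, lam i) ∣ (∑ j, r j) - 1 := by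
    intro s
    induction s using Finset.induction_on with
    | empty => simpa using one_dvd _
    | insert a s h ih =>
      rw [Finset.prod_insert h]
      exact Nat.Coprime.mul_dvd_of_dvd_of_dvd
        (Nat.Coprime.prod_right fun j hj => hcop a j fun hh => h (hh ▸ hj))
        (hdvd_i a) ih
  have htS : (Ideal.Quotient.mk J Polynomial.X) ^ (∑ j, r j) =
      Ideal.Quotient.mk J Polynomial.X := by
    obtain ⟨k, hk⟩ := hprodvd Finset.univ
    have hS : ∑ j, r j = 1 + L * k := by
      have : (∑ j, r j) - 1 = L * k := hk
      omega
    rw [hS, pow_add, pow_one, pow_mul, htL, one_pow, mul_one]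
  have hTir : ∀ i, (∏ j, Ideal.Quotient.mk I (MvPolynomial.X j)) ^ r i =
      Ideal.Quotient.mk I (MvPolynomial.X i) := by
    intro i
    rw [← Finset.prod_pow]
    refine (Finset.prod_eq_single i (fun j _ hji => ?_)
      (fun h => absurd (Finset.mem_univ i) h)).trans ?_
    · obtain ⟨d, hd⟩ := hrdvd i j hji
      rw [hd, pow_mul, hTi j, one_pow]
    · obtain ⟨k, hk⟩ := hr1 i
      rw [hk, pow_succ, pow_mul, hTi i, one_pow, one_mul]
  have hcomp1 : τ0.comp τinv = RingHom.id _ := by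
    apply Ideal.Quotient.ringHom_ext
    apply Polynomial.ringHom_ext
    · intro a
      simp only [RingHom.comp_apply, RingHom.id_apply]
      rw [hτinvmk, hψC, hτ0C]
    · simp only [RingHom.comp_apply, RingHom.id_apply]
      rw [hτinvmk, hψX, map_prod]
      rw [Finset.prod_congr rfl fun i _ => hτ0X i, Finset.prod_pow_eq_pow_sum, htS]
  have hcomp2 : τinv.comp τ0 = RingHom.id _ := by
    apply Ideal.Quotient.ringHom_ext
    apply MvPolynomial.ringHom_ext
    · intro a
      simp only [RingHom.comp_apply, RingHom.id_apply]
      rw [hτ0C, hτinvmk, hψC]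
    · intro i
      simp only [RingHom.comp_apply, RingHom.id_apply]
      rw [hτ0X, map_pow, hτinvmk, hψX, hTir]
  have hequiv : (τ0.comp (σE : (MvPolynomial (Fin e) F ⧸ I) →+* (MvPolynomial (Fin e) F ⧸ I)))
      = ((σt : (Polynomial F ⧸ J) →+* (Polynomial F ⧸ J)).comp τ0) := by
    apply Ideal.Quotient.ringHom_ext
    apply MvPolynomial.ringHom_ext
    · intro a
      simp only [RingHom.comp_apply, RingEquiv.coe_toRingHom]
      rw [hEC, hτ0C, hτ0C, htC]
    · intro i
      simp only [RingHom.comp_apply, RingEquiv.coe_toRingHom]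
      rw [hEX, map_mul, map_mul, hτ0C, hτ0X, map_pow, htX, map_mul, mul_pow]
      congr 1
      rw [← map_pow, ← Polynomial.C_pow, hAr i]
  refine ⟨⟨h1a, h1b, h1c⟩,
    ⟨r, RingEquiv.ofRingHom τ0 τinv hcomp1 hcomp2, hτ0C, hτ0X, ?_⟩, ?_⟩
  · intro x
    exact RingHom.congr_fun hequiv x
  · -- part (3)
    intro f hf
    obtain ⟨c, hc, hfc⟩ := h1c (τ0 f)
      ((RingHom.congr_fun hequiv f).symm.trans (congrArg τ0 hf))
    have hinj : Function.Injective τ0 :=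
      (RingEquiv.ofRingHom τ0 τinv hcomp1 hcomp2).injective
    exact ⟨c, hc, hinj (by rw [hτ0C, ← hfc])⟩
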